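/- Let G be a finite simple graph with vertex set V and edge set E, and let k be a positive integer. Then G is k-colorable if and only if the k-coloring polynomial system of G over the complex numbers has a common zero in ℂ^V, i.e., there exists a : V → ℂ with a_v^k − 1 = 0 for every v ∈ V and Σ_{t=0}^{k−1} a_u^t a_v^{k−1−t} = 0 for every edge {u,v} ∈ E. -/

import Mathlib

/-- A finite simple graph `G` is `k`-colorable if and only if its
`k`-coloring polynomial system over `ℂ` has a common zero: there is `a : V → ℂ` with
`a v ^ k - 1 = 0` for every vertex `v` and
`∑_{t=0}^{k-1} a u ^ t * a v ^ (k-1-t) = 0` for every edge `{u,v}`. -/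
theorem colorable_iff_complex_system_has_zero
    {V : Type*} [Fintype V] (G : SimpleGraph V) (k : ℕ) (hk : 0 < k) :
    G.Colorable k ↔
      ∃ a : V → ℂ,
        (∀ v : V, a v ^ k - 1 = 0) ∧
        (∀ u v : V, G.Adj u v →
          (∑ t ∈ Finset.range k, a u ^ t * a v ^ (k - 1 - t)) = 0) := by
  have hζ : IsPrimitiveRoot (Complex.exp (2 * Real.pi * Complex.I / k)) k :=
    Complex.isPrimitiveRoot_exp k hk.ne'
  set ζ := Complex.exp (2 * Real.pi * Complex.I / k)
  constructor
  · rintro ⟨C⟩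
    refine ⟨fun v => ζ ^ (C v : ℕ), ?_, ?_⟩
    · intro v
      rw [sub_eq_zero, ← pow_mul, mul_comm, pow_mul, hζ.pow_eq_one, one_pow]
    · intro u v huv
      have hne : ζ ^ (C u : ℕ) ≠ ζ ^ (C v : ℕ) := by
        intro h
        exact C.valid huv (Fin.ext (hζ.pow_inj (C u).isLt (C v).isLt h))
      have key := geom_sum₂_mul (ζ ^ (C u : ℕ)) (ζ ^ (C v : ℕ)) k
      have hk1 : (ζ ^ (C u : ℕ)) ^ k - (ζ ^ (C v : ℕ)) ^ k = 0 := by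
        rw [← pow_mul, mul_comm (C u : ℕ), pow_mul, hζ.pow_eq_one, one_pow,
          ← pow_mul, mul_comm (C v : ℕ), pow_mul, hζ.pow_eq_one, one_pow, sub_self]
      rw [hk1] at key
      rcases mul_eq_zero.mp key with h | h
      · exact h
      · exact absurd (sub_eq_zero.mp h) hne
  · rintro ⟨a, hv, he⟩
    have hne : ∀ u w : V, G.Adj u w → a u ≠ a w := by
      intro u w huw h
      have hsum := he u w huw
      rw [h] at hsum
      have : ∀ t ∈ Finset.range k, a w ^ t * a w ^ (k - 1 - t) = a w ^ (k - 1) := by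
        intro t ht
        rw [← pow_add]
        congr 1
        have := Finset.mem_range.mp ht
        omega
      rw [Finset.sum_congr rfl this, Finset.sum_const, Finset.card_range] at hsum
      have haw : a w ≠ 0 := by
        intro h0
        have := hv w
        rw [h0, zero_pow hk.ne'] at this
        simp at this
      rw [nsmul_eq_mul] at hsum
      rcases mul_eq_zero.mp hsum with h | h
      · exact (Nat.cast_ne_zero.mpr hk.ne' : (k : ℂ) ≠ 0) h
      · exact pow_ne_zero _ haw h
    have hmem : ∀ v, a v ∈ Polynomial.nthRootsFinset k (1 : ℂ) := by
      intro v
      rw [Polynomial.mem_nthRootsFinset hk]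
      exact sub_eq_zero.mp (hv v)
    let C : G.Coloring ↥(Polynomial.nthRootsFinset k (1 : ℂ)) :=
      SimpleGraph.Coloring.mk (fun v => ⟨a v, hmem v⟩)
        (fun {u w} huw h => hne u w huw (congrArg Subtype.val h))
    have := C.colorable
    rwa [Fintype.card_coe, hζ.card_nthRootsFinset] at this
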